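/- In the formal power series ring R⟦x,y,t⟧ the following identity holds: ∑_{r≥0} ∑_{n≥k≥0} B^r_{n+r,k+r} · x^n y^r t^k / (n!·r!) = exp( y·∑_{j≥0} a_{j+1} x^j/j! ) · exp( t·∑_{j≥1} b_j x^j/j! ). -/

import Mathlib

noncomputable section

/-- `R = ℚ[a_1,a_2,…;b_1,b_2,…]`, realized as the polynomial ring over `ℚ` with variables
`X (true, i) = a_i` and `X (false, i) = b_i`. -/
abbrev RR : Type := MvPolynomial (Bool × ℕ) ℚ

/-- the variable `a_i` -/
def va (i : ℕ) : RR := MvPolynomial.X (true, i)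
/-- the variable `b_i` -/
def vb (i : ℕ) : RR := MvPolynomial.X (false, i)

/-- the derivation `∂` of `R` with `∂ a_i = a_{i+1}` and `∂ b_i = b_{i+1}` -/
def del : RR → RR :=
  fun p => MvPolynomial.mkDerivation ℚ (fun s : Bool × ℕ => MvPolynomial.X (s.1, s.2 + 1)) p

/-- coefficientwise extension of a map on coefficients to `A[t]` (i.e. `∂` with `∂ t = 0`) -/
def polyLift {A : Type*} [Semiring A] (D : A → A) (p : Polynomial A) : Polynomial A :=
  p.sum fun i c => Polynomial.C (D c) * Polynomial.X ^ i

/-- the map `E : R[t] → R[t]`, `E(p) = t·b_1·p + ∂(p)` -/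
def EOp (p : Polynomial RR) : Polynomial RR :=
  Polynomial.C (vb 1) * Polynomial.X * p + polyLift del p

/-- the partial `r`-Bell polynomial `B^r_{n+r,k+r}`: the coefficient of `t^k` in `E^n(a_1^r)` -/
def rBell (n k r : ℕ) : RR := (EOp^[n] (Polynomial.C (va 1 ^ r))).coeff k

/-- Exponential of a formal multivariate power series (intended for series with zero
constant term): `exp(u) = ∑_{j≥0} u^j/j!`; for a series `u` of positive order only the
terms with `j ≤ |d|` contribute to the coefficient of a monomial of total degree `|d|`. -/
def sexp {σ : Type*} {A : Type*} [Ring A] [Algebra ℚ A] (u : MvPowerSeries σ A) :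
    MvPowerSeries σ A :=
  fun d => MvPowerSeries.coeff d
    (∑ j ∈ Finset.range (d.sum (fun _ m => m) + 1), (j.factorial : ℚ)⁻¹ • u ^ j)

/-- The generating series `S(t,x,y) = ∑_{r≥0} ∑_{n≥k≥0} B^r_{n+r,k+r} x^n y^r t^k/(n!·r!)`
in `R⟦x,y,t⟧` (coordinates `0 ↦ x`, `1 ↦ y`, `2 ↦ t`). -/
def Sgen : MvPowerSeries (Fin 3) RR :=
  fun d => if d 2 ≤ d 0 then
    (((d 0).factorial * (d 1).factorial : ℚ))⁻¹ • rBell (d 0) (d 2) (d 1)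
  else 0

/-- the series `y·∑_{j≥0} a_{j+1} x^j/j!` in `R⟦x,y,t⟧` -/
def serA : MvPowerSeries (Fin 3) RR :=
  fun d => if d 1 = 1 ∧ d 2 = 0 then ((d 0).factorial : ℚ)⁻¹ • va (d 0 + 1) else 0

/-- the series `t·∑_{j≥1} b_j x^j/j!` in `R⟦x,y,t⟧` -/
def serB : MvPowerSeries (Fin 3) RR :=
  fun d => if d 1 = 0 ∧ d 2 = 1 ∧ 1 ≤ d 0 then ((d 0).factorial : ℚ)⁻¹ • vb (d 0) else 0


-- ### derivation lemmas
abbrev delD : Derivation ℚ RR RR :=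
  MvPolynomial.mkDerivation ℚ (fun s : Bool × ℕ => MvPolynomial.X (s.1, s.2 + 1))

lemma del_eq (p : RR) : del p = delD p := rfl

@[simp] lemma del_va (i : ℕ) : del (va i) = va (i + 1) := by
  simp [del_eq, va, MvPolynomial.mkDerivation_X]
@[simp] lemma del_vb (i : ℕ) : del (vb i) = vb (i + 1) := by
  simp [del_eq, vb, MvPolynomial.mkDerivation_X]
@[simp] lemma del_zero : del 0 = 0 := by simp [del_eq]
@[simp] lemma del_one : del 1 = 0 := by simp [del_eq]
lemma del_add (p q : RR) : del (p + q) = del p + del q := by simp [del_eq]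
lemma del_mul (p q : RR) : del (p * q) = del p * q + p * del q := by
  simp [del_eq, Derivation.leibniz, smul_eq_mul]; ring
lemma del_smul (c : ℚ) (p : RR) : del (c • p) = c • del p := by simp [del_eq]
lemma del_sum {ι : Type*} (s : Finset ι) (f : ι → RR) :
    del (∑ i ∈ s, f i) = ∑ i ∈ s, del (f i) := by
  simp [del_eq, map_sum]
-- ### the P and Q families
def Pp : ℕ → ℕ → RR
  | 0, r => va 1 ^ r
  | n+1, r => del (Pp n r)

def Qq : ℕ → ℕ → RR
  | 0, k => if k = 0 then 1 else 0
  | n+1, 0 => del (Qq n 0)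
  | n+1, k+1 => vb 1 * Qq n k + del (Qq n (k+1))

lemma Qq_succ (n k : ℕ) :
    Qq (n+1) k = (if k = 0 then 0 else vb 1 * Qq n (k-1)) + del (Qq n k) := by
  match k with
  | 0 => simp [Qq]
  | k+1 => simp [Qq]

@[simp] lemma Qq_zero_right (n : ℕ) : Qq n 0 = if n = 0 then 1 else 0 := by
  induction n with
  | zero => simp [Qq]
  | succ n ih => rw [Qq, ih]; split <;> simp

lemma Qq_eq_zero (n k : ℕ) (h : n < k) : Qq n k = 0 := by
  induction n generalizing k with
  | zero =>
    rw [Qq]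
    simp only [if_neg (by omega : ¬ k = 0)]
  | succ n ih =>
    rw [Qq_succ, ih k (by omega)]
    rw [del_zero, add_zero]
    split
    · rfl
    · next hk => rw [ih (k-1) (by omega), mul_zero]

-- ### rBell recursions
lemma coeff_polyLift (p : Polynomial RR) (k : ℕ) : (polyLift del p).coeff k = del (p.coeff k) := by
  rw [polyLift, Polynomial.sum]
  rw [Polynomial.finset_sum_coeff]
  simp only [Polynomial.coeff_C_mul, Polynomial.coeff_X_pow, mul_ite, mul_one, mul_zero]
  rw [Finset.sum_ite_eq p.support k (fun i => del (p.coeff i))]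
  split
  · rfl
  · next h => rw [Polynomial.notMem_support_iff.mp h, del_zero]

@[simp] lemma rBell_zero (k r : ℕ) :
    rBell 0 k r = if k = 0 then va 1 ^ r else 0 := by
  rw [rBell, Function.iterate_zero_apply, Polynomial.coeff_C]

lemma rBell_succ (n k r : ℕ) :
    rBell (n+1) k r = (if k = 0 then 0 else vb 1 * rBell n (k-1) r) + del (rBell n k r) := by
  rw [rBell, Function.iterate_succ_apply', EOp, Polynomial.coeff_add, coeff_polyLift]
  congr 1
  rw [mul_assoc, Polynomial.coeff_C_mul]
  match k with
  | 0 => simp [Polynomial.mul_coeff_zero]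
  | k+1 => rw [mul_comm Polynomial.X, Polynomial.coeff_mul_X]; simp [rBell]

open Finset
section
variable {M : Type*} [AddCommMonoid M] [Module ℚ M]

lemma pascal_split (n : ℕ) (T : ℕ → M) :
    ∑ m ∈ range (n+2), (((n+1).choose m : ℚ)) • T m
      = ∑ m ∈ range (n+1), ((n.choose m : ℚ)) • T (m+1)
        + ∑ m ∈ range (n+1), ((n.choose m : ℚ)) • T m := by
  rw [Finset.sum_range_succ' (fun m => (((n+1).choose m : ℚ)) • T m) (n+1)]
  simp only [Nat.choose_succ_succ, Nat.cast_add, add_smul, Nat.choose_zero_right, Nat.cast_one,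
    one_smul]
  rw [Finset.sum_add_distrib]
  rw [Finset.sum_range_succ (fun m => ((n.choose (m+1) : ℚ)) • T (m+1)) n]
  rw [Finset.sum_range_succ' (fun m => ((n.choose m : ℚ)) • T m) n]
  simp only [Nat.choose_succ_self, Nat.cast_zero, zero_smul, add_zero, Nat.choose_zero_right,
    Nat.cast_one, one_smul]
  abel
end

lemma PA (n j : ℕ) :
    Pp n (j+1) = ∑ m ∈ range (n+1), ((n.choose m : ℚ)) • (va (m+1) * Pp (n-m) j) := by
  induction n with
  | zero => simp [Pp, pow_succ, mul_comm]
  | succ n ih =>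
    have h1 : Pp (n+1) (j+1) = del (Pp n (j+1)) := rfl
    rw [h1, ih, del_sum, pascal_split n (fun m => va (m+1) * Pp (n+1-m) j)]
    have h2 : ∀ m ∈ range (n+1),
        ((n.choose m : ℚ)) • (va (m+1+1) * Pp (n+1-(m+1)) j)
          = ((n.choose m : ℚ)) • (va (m+2) * Pp (n-m) j) := by
      intro m hm; rw [Nat.succ_sub_succ]
    have h3 : ∀ m ∈ range (n+1),
        ((n.choose m : ℚ)) • (va (m+1) * Pp (n+1-m) j)
          = ((n.choose m : ℚ)) • (va (m+1) * del (Pp (n-m) j)) := by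
      intro m hm
      rw [Finset.mem_range] at hm
      have : n + 1 - m = (n - m) + 1 := by omega
      rw [this]
      rfl
    rw [Finset.sum_congr rfl h2, Finset.sum_congr rfl h3]
    rw [← Finset.sum_add_distrib]
    apply Finset.sum_congr rfl
    intro m hm
    rw [del_smul, del_mul, del_va, smul_add]

def vbp : ℕ → RR := fun m => if m = 0 then 0 else vb m

@[simp] lemma vbp_zero : vbp 0 = 0 := rfl
@[simp] lemma vbp_succ (m : ℕ) : vbp (m+1) = vb (m+1) := rfl
@[simp] lemma del_vbp_succ (m : ℕ) : del (vbp (m+1)) = vbp (m+2) := by simp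
@[simp] lemma del_vbp_zero : del (vbp 0) = 0 := by simp

@[simp] lemma Qq_one (n : ℕ) : Qq n 1 = vbp n := by
  induction n with
  | zero => simp [Qq, vbp]
  | succ n ih =>
    rw [Qq, ih]
    match n with
    | 0 => simp [del_zero]
    | m+1 => simp [del_vb]

lemma del_Qq (j k : ℕ) : del (Qq j (k+1)) = Qq (j+1) (k+1) - vb 1 * Qq j k := by
  rw [Qq]; ring

lemma del_Qq' (j k : ℕ) :
    del (Qq j k) = Qq (j+1) k - (if k = 0 then 0 else vb 1 * Qq j (k-1)) := by
  rw [Qq_succ]; ring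

lemma QB (n : ℕ) : ∀ k : ℕ, ((k : ℚ) + 1) • Qq n (k+1)
    = ∑ m ∈ range (n+1), ((n.choose m : ℚ)) • (vbp m * Qq (n-m) k) := by
  induction n with
  | zero => intro k; simp [Qq]
  | succ n ih =>
    intro k
    set S1 := ∑ m ∈ range (n+1), ((n.choose m : ℚ)) • (vbp (m+1) * Qq (n-m) k) with hS1
    set S2 := ∑ m ∈ range (n+1), ((n.choose m : ℚ)) • (vbp m * Qq (n-m+1) k) with hS2
    have A4 : ∑ m ∈ range (n+1), ((n.choose m : ℚ)) • (del (vbp m) * Qq (n-m) k)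
        = S1 - vb 1 * Qq n k := by
      rw [hS1, Finset.sum_range_succ' (fun m => ((n.choose m : ℚ)) • (del (vbp m) * Qq (n-m) k)) n,
        Finset.sum_range_succ' (fun m => ((n.choose m : ℚ)) • (vbp (m+1) * Qq (n-m) k)) n]
      simp only [del_vbp_succ, del_vbp_zero, zero_mul, smul_zero, add_zero, Nat.choose_zero_right,
        Nat.cast_one, one_smul, Nat.sub_zero, vbp_succ, del_vb, zero_add]
      abel
    have A2 : ∑ m ∈ range (n+1), ((n.choose m : ℚ)) • (vbp m * del (Qq (n-m) k))
        = S2 - (k : ℚ) • (vb 1 * Qq n k) := by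
      have step : ∀ m ∈ range (n+1), ((n.choose m : ℚ)) • (vbp m * del (Qq (n-m) k))
          = ((n.choose m : ℚ)) • (vbp m * Qq (n-m+1) k)
            - (if k = 0 then 0 else vb 1 * (((n.choose m : ℚ)) • (vbp m * Qq (n-m) (k-1)))) := by
        intro m hm
        rw [del_Qq', mul_sub, smul_sub]
        congr 1
        split
        · simp
        · rw [mul_smul_comm]; ring_nf
      rw [Finset.sum_congr rfl step, Finset.sum_sub_distrib]
      congr 1
      match k with
      | 0 => simp
      | k+1 =>
        simp only [if_neg (Nat.succ_ne_zero k), Nat.add_sub_cancel]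
        rw [← Finset.mul_sum, ← ih k, mul_smul_comm]
        push_cast
        ring_nf
    -- LHS computation
    have e1 : ((k:ℚ)+1) • Qq (n+1) (k+1)
        = ((k:ℚ)+1) • (vb 1 * Qq n k) + (S1 - vb 1 * Qq n k) + (S2 - (k : ℚ) • (vb 1 * Qq n k)) := by
      have hrec : Qq (n+1) (k+1) = vb 1 * Qq n k + del (Qq n (k+1)) := rfl
      rw [hrec, smul_add, ← del_smul, ih k, del_sum]
      have hsplit : ∀ m ∈ range (n+1), del (((n.choose m : ℚ)) • (vbp m * Qq (n-m) k))
          = ((n.choose m : ℚ)) • (del (vbp m) * Qq (n-m) k)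
            + ((n.choose m : ℚ)) • (vbp m * del (Qq (n-m) k)) := by
        intro m hm
        rw [del_smul, del_mul, smul_add]
      rw [Finset.sum_congr rfl hsplit, Finset.sum_add_distrib, A4, A2]
      abel
    rw [e1]
    -- RHS via pascal_split
    rw [pascal_split n (fun m => vbp m * Qq (n+1-m) k)]
    have h2 : ∀ m ∈ range (n+1), ((n.choose m : ℚ)) • (vbp (m+1) * Qq (n+1-(m+1)) k)
        = ((n.choose m : ℚ)) • (vbp (m+1) * Qq (n-m) k) := by
      intro m hm; rw [Nat.succ_sub_succ]
    have h3 : ∀ m ∈ range (n+1), ((n.choose m : ℚ)) • (vbp m * Qq (n+1-m) k)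
        = ((n.choose m : ℚ)) • (vbp m * Qq (n-m+1) k) := by
      intro m hm
      rw [Finset.mem_range] at hm
      have : n + 1 - m = (n - m) + 1 := by omega
      rw [this]
    rw [Finset.sum_congr rfl h2, Finset.sum_congr rfl h3, ← hS1, ← hS2]
    have : ((k:ℚ)+1) • (vb 1 * Qq n k) = (k:ℚ) • (vb 1 * Qq n k) + vb 1 * Qq n k := by
      rw [add_smul, one_smul]
    rw [this]
    abel

lemma rBell_eq (n : ℕ) : ∀ k r : ℕ,
    rBell n k r = ∑ m ∈ range (n+1), ((n.choose m : ℚ)) • (Pp m r * Qq (n-m) k) := by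
  induction n with
  | zero =>
    intro k r
    rw [rBell_zero]
    have : Pp 0 r = va 1 ^ r := rfl
    simp [Qq, this]
  | succ n ih =>
    intro k r
    rw [rBell_succ, ih k, pascal_split n (fun m => Pp m r * Qq (n+1-m) k)]
    have h2 : ∀ m ∈ range (n+1), ((n.choose m : ℚ)) • (Pp (m+1) r * Qq (n+1-(m+1)) k)
        = ((n.choose m : ℚ)) • (del (Pp m r) * Qq (n-m) k) := by
      intro m hm; rw [Nat.succ_sub_succ]; rfl
    have h3 : ∀ m ∈ range (n+1), ((n.choose m : ℚ)) • (Pp m r * Qq (n+1-m) k)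
        = (if k = 0 then 0 else vb 1 * (((n.choose m : ℚ)) • (Pp m r * Qq (n-m) (k-1))))
          + ((n.choose m : ℚ)) • (Pp m r * del (Qq (n-m) k)) := by
      intro m hm
      rw [Finset.mem_range] at hm
      have e : n + 1 - m = (n - m) + 1 := by omega
      rw [e, Qq_succ, mul_add, smul_add]
      congr 1
      split
      · simp
      · rw [mul_smul_comm]; ring_nf
    rw [Finset.sum_congr rfl h2, Finset.sum_congr rfl h3, Finset.sum_add_distrib]
    have h4 : del (∑ m ∈ range (n+1), ((n.choose m : ℚ)) • (Pp m r * Qq (n-m) k))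
        = ∑ m ∈ range (n+1), ((n.choose m : ℚ)) • (del (Pp m r) * Qq (n-m) k)
          + ∑ m ∈ range (n+1), ((n.choose m : ℚ)) • (Pp m r * del (Qq (n-m) k)) := by
      rw [del_sum, ← Finset.sum_add_distrib]
      apply Finset.sum_congr rfl
      intro m hm
      rw [del_smul, del_mul, smul_add]
    rw [h4]
    split
    · simp only [Finset.sum_const_zero]; abel
    · rw [← Finset.mul_sum, ih (k-1)]
      abel

-- ### Finsupp on Fin 3 infrastructure
def Dg (n r k : ℕ) : Fin 3 →₀ ℕ :=
  Finsupp.single 0 n + Finsupp.single 1 r + Finsupp.single 2 k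

@[simp] lemma Dg_apply0 (n r k : ℕ) : Dg n r k 0 = n := by
  simp [Dg, Finsupp.single_apply]
@[simp] lemma Dg_apply1 (n r k : ℕ) : Dg n r k 1 = r := by
  simp [Dg, Finsupp.single_apply]
@[simp] lemma Dg_apply2 (n r k : ℕ) : Dg n r k 2 = k := by
  simp [Dg, Finsupp.single_apply]

lemma fin3_ext {d e : Fin 3 →₀ ℕ} (h0 : d 0 = e 0) (h1 : d 1 = e 1) (h2 : d 2 = e 2) :
    d = e := by
  apply Finsupp.ext
  intro i
  fin_cases i
  · exact h0
  · exact h1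
  · exact h2

lemma eq_Dg (d : Fin 3 →₀ ℕ) : d = Dg (d 0) (d 1) (d 2) := by
  apply fin3_ext <;> simp

lemma Dg_add (a b c a' b' c' : ℕ) :
    Dg a b c + Dg a' b' c' = Dg (a+a') (b+b') (c+c') := by
  apply fin3_ext <;> simp

lemma key (d : Fin 3 →₀ ℕ) (F : (Fin 3 →₀ ℕ) × (Fin 3 →₀ ℕ) → RR) (c1 c2 : ℕ)
    (hF : ∀ p ∈ Finset.HasAntidiagonal.antidiagonal d, F p ≠ 0 → p.1 2 = c1 ∧ p.2 1 = c2) :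
    ∑ p ∈ Finset.HasAntidiagonal.antidiagonal d, F p
      = if c1 ≤ d 2 ∧ c2 ≤ d 1 then
          ∑ m ∈ range (d 0 + 1), F (Dg m (d 1 - c2) c1, Dg (d 0 - m) c2 (d 2 - c1))
        else 0 := by
  classical
  have hcomp : ∀ p ∈ Finset.HasAntidiagonal.antidiagonal d, ∀ i : Fin 3, p.1 i + p.2 i = d i := by
    intro p hp i
    rw [Finset.HasAntidiagonal.mem_antidiagonal] at hp
    rw [← hp]
    simp
  split
  case isTrue h =>
    rw [← Finset.sum_filter_of_ne (p := fun p => p.1 2 = c1 ∧ p.2 1 = c2) hF]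
    apply Finset.sum_bij' (i := fun p _ => p.1 0)
      (j := fun m _ => (Dg m (d 1 - c2) c1, Dg (d 0 - m) c2 (d 2 - c1)))
    · -- hi
      intro p hp
      rw [Finset.mem_filter] at hp
      have := hcomp p hp.1 0
      rw [Finset.mem_range]
      omega
    · -- hj
      intro m hm
      rw [Finset.mem_range] at hm
      rw [Finset.mem_filter, Finset.HasAntidiagonal.mem_antidiagonal]
      refine ⟨?_, by simp, by simp⟩
      rw [Dg_add]
      rw [eq_Dg d]
      simp only [Dg_apply0, Dg_apply1, Dg_apply2]
      congr 1 <;> try congr 1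
      all_goals omega
    · -- j ∘ i = id
      intro p hp
      rw [Finset.mem_filter] at hp
      obtain ⟨hpa, h2, h1⟩ := hp
      have e0 := hcomp p hpa 0
      have e1 := hcomp p hpa 1
      have e2 := hcomp p hpa 2
      have hp1 : p.1 = Dg (p.1 0) (d 1 - c2) c1 := by
        apply fin3_ext <;> simp <;> omega
      have hp2 : p.2 = Dg (d 0 - p.1 0) c2 (d 2 - c1) := by
        apply fin3_ext <;> simp <;> omega
      rw [Prod.ext_iff]
      exact ⟨hp1.symm, hp2.symm⟩
    · -- i ∘ j = id
      intro m hm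
      simp
    · -- values
      intro p hp
      rw [Finset.mem_filter] at hp
      obtain ⟨hpa, h2, h1⟩ := hp
      have e0 := hcomp p hpa 0
      have e1 := hcomp p hpa 1
      have e2 := hcomp p hpa 2
      congr 1
      rw [Prod.ext_iff]
      constructor
      · apply fin3_ext <;> simp <;> omega
      · apply fin3_ext <;> simp <;> omega
  case isFalse h =>
    apply Finset.sum_eq_zero
    intro p hp
    by_contra hne
    obtain ⟨e1, e2⟩ := hF p hp hne
    have h1 := hcomp p hp 1
    have h2 := hcomp p hp 2
    omega

-- ### coefficient lemmas
lemma fact_inv {m n : ℕ} (h : m ≤ n) :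
    ((n.factorial : ℚ))⁻¹ * (n.choose m : ℚ)
      = ((m.factorial : ℚ))⁻¹ * (((n-m).factorial : ℚ))⁻¹ := by
  have he := Nat.choose_mul_factorial_mul_factorial h
  have h1 : (m.factorial : ℚ) ≠ 0 := Nat.cast_ne_zero.mpr (Nat.factorial_ne_zero m)
  have h2 : (((n-m).factorial : ℚ)) ≠ 0 := Nat.cast_ne_zero.mpr (Nat.factorial_ne_zero _)
  have h3 : ((n.factorial : ℚ)) ≠ 0 := Nat.cast_ne_zero.mpr (Nat.factorial_ne_zero n)
  field_simp
  push_cast [← he]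
  ring

@[simp] lemma Pp_zero (n : ℕ) : Pp n 0 = if n = 0 then 1 else 0 := by
  induction n with
  | zero => simp [Pp]
  | succ n ih => rw [Pp, ih]; split <;> simp

lemma coeff_serA (e : Fin 3 →₀ ℕ) :
    MvPowerSeries.coeff e serA
      = if e 1 = 1 ∧ e 2 = 0 then ((e 0).factorial : ℚ)⁻¹ • va (e 0 + 1) else 0 := rfl

lemma coeff_serB (e : Fin 3 →₀ ℕ) :
    MvPowerSeries.coeff e serB
      = if e 1 = 0 ∧ e 2 = 1 ∧ 1 ≤ e 0 then ((e 0).factorial : ℚ)⁻¹ • vb (e 0) else 0 := rfl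

lemma coeff_serB' (e : Fin 3 →₀ ℕ) :
    MvPowerSeries.coeff e serB
      = if e 1 = 0 ∧ e 2 = 1 then ((e 0).factorial : ℚ)⁻¹ • vbp (e 0) else 0 := by
  rw [coeff_serB]
  by_cases h : e 1 = 0 ∧ e 2 = 1
  · rcases Nat.eq_zero_or_pos (e 0) with h0 | h0
    · simp [h, h0, vbp]
    · have h1 : 1 ≤ e 0 := h0
      have hv : vbp (e 0) = vb (e 0) := by rw [vbp]; rw [if_neg (by omega)]
      simp [h.1, h.2, h1, hv]
  · rw [if_neg (by tauto), if_neg h]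

lemma coeff_one_iff (d : Fin 3 →₀ ℕ) :
    (MvPowerSeries.coeff d) (1 : MvPowerSeries (Fin 3) RR) = if d 0 = 0 ∧ d 1 = 0 ∧ d 2 = 0 then 1 else 0 := by
  rw [MvPowerSeries.coeff_one]
  congr 1
  simp only [eq_iff_iff]
  constructor
  · intro h; subst h; simp
  · rintro ⟨h0, h1, h2⟩; rw [eq_Dg d, h0, h1, h2]; apply fin3_ext <;> simp

lemma coeff_serA_pow (j : ℕ) : ∀ d : Fin 3 →₀ ℕ,
    MvPowerSeries.coeff d (serA ^ j)
      = if d 1 = j ∧ d 2 = 0 then (((d 0).factorial : ℚ))⁻¹ • Pp (d 0) j else 0 := by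
  induction j with
  | zero =>
    intro d
    rw [pow_zero, coeff_one_iff, Pp_zero]
    by_cases h0 : d 0 = 0 <;> by_cases h1 : d 1 = 0 <;> by_cases h2 : d 2 = 0 <;>
      simp [h0, h1, h2, Nat.factorial]
  | succ j ih =>
    intro d
    rw [pow_succ', MvPowerSeries.coeff_mul]
    rw [key d _ 0 j ?hF]
    case hF =>
      intro p _ hne
      constructor
      · by_contra hc
        apply hne
        rw [coeff_serA, if_neg (by tauto), zero_mul]
      · by_contra hc
        apply hne
        rw [ih, if_neg (by tauto), mul_zero]
    simp only [Nat.sub_zero, zero_le, true_and]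
    by_cases hj : j ≤ d 1
    case neg =>
      rw [if_neg hj, if_neg (by rintro ⟨hh, -⟩; omega)]
    rw [if_pos hj]
    by_cases h2 : d 2 = 0
    case neg =>
      rw [if_neg (by tauto)]
      apply Finset.sum_eq_zero
      intro m _
      rw [ih, if_neg (by simp [h2]), mul_zero]
    by_cases h1 : d 1 = j + 1
    case neg =>
      rw [if_neg (by tauto)]
      apply Finset.sum_eq_zero
      intro m _
      rw [coeff_serA, if_neg (by simp; omega), zero_mul]
    -- main case
    rw [if_pos ⟨h1, h2⟩]
    have hd1 : d 1 - j = 1 := by omega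
    have step : ∀ m ∈ range (d 0 + 1),
        (MvPowerSeries.coeff (Dg m (d 1 - j) 0)) serA
            * (MvPowerSeries.coeff (Dg (d 0 - m) j (d 2))) (serA ^ j)
          = (((d 0).factorial : ℚ))⁻¹ • (((d 0).choose m : ℚ) • (va (m+1) * Pp (d 0 - m) j)) := by
      intro m hm
      rw [Finset.mem_range] at hm
      rw [coeff_serA, ih]
      simp only [Dg_apply0, Dg_apply1, Dg_apply2, hd1, h2]
      simp only [eq_self_iff_true, and_self, if_true, true_and, and_true]
      rw [smul_mul_smul_comm, smul_smul]
      congr 1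
      exact (fact_inv (by omega : m ≤ d 0)).symm
    rw [Finset.sum_congr rfl step, ← Finset.smul_sum, ← PA]

lemma coeff_serB_pow (k : ℕ) : ∀ d : Fin 3 →₀ ℕ,
    MvPowerSeries.coeff d (serB ^ k)
      = if d 1 = 0 ∧ d 2 = k then
          ((k.factorial : ℚ) * (((d 0).factorial : ℚ))⁻¹) • Qq (d 0) k
        else 0 := by
  induction k with
  | zero =>
    intro d
    rw [pow_zero, coeff_one_iff]
    by_cases h0 : d 0 = 0 <;> by_cases h1 : d 1 = 0 <;> by_cases h2 : d 2 = 0 <;>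
      simp [h0, h1, h2, Nat.factorial]
  | succ k ih =>
    intro d
    rw [pow_succ', MvPowerSeries.coeff_mul]
    rw [key d _ 1 0 ?hF]
    case hF =>
      intro p _ hne
      constructor
      · by_contra hc
        apply hne
        rw [coeff_serB, if_neg (by tauto), zero_mul]
      · by_contra hc
        apply hne
        rw [ih, if_neg (by tauto), mul_zero]
    simp only [Nat.sub_zero, zero_le, and_true]
    by_cases hd2 : 1 ≤ d 2
    case neg =>
      rw [if_neg hd2, if_neg (by rintro ⟨-, hh⟩; omega)]
    rw [if_pos hd2]
    by_cases h1 : d 1 = 0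
    case neg =>
      rw [if_neg (by tauto)]
      apply Finset.sum_eq_zero
      intro m _
      rw [coeff_serB', if_neg (by simp [h1]), zero_mul]
    by_cases h2 : d 2 = k + 1
    case neg =>
      rw [if_neg (by tauto)]
      apply Finset.sum_eq_zero
      intro m _
      rw [ih, if_neg (by simp; omega), mul_zero]
    -- main case
    rw [if_pos ⟨h1, h2⟩]
    have hd21 : d 2 - 1 = k := by omega
    have step : ∀ m ∈ range (d 0 + 1),
        (MvPowerSeries.coeff (Dg m (d 1) 1)) serB
            * (MvPowerSeries.coeff (Dg (d 0 - m) 0 (d 2 - 1))) (serB ^ k)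
          = ((k.factorial : ℚ) * (((d 0).factorial : ℚ))⁻¹) •
              (((d 0).choose m : ℚ) • (vbp m * Qq (d 0 - m) k)) := by
      intro m hm
      rw [Finset.mem_range] at hm
      rw [coeff_serB', ih]
      simp only [Dg_apply0, Dg_apply1, Dg_apply2, hd21, h1]
      simp only [eq_self_iff_true, and_self, if_true, true_and, and_true]
      rw [smul_mul_smul_comm, smul_smul]
      congr 1
      linear_combination (-(k.factorial : ℚ)) * fact_inv (by omega : m ≤ d 0)
    rw [Finset.sum_congr rfl step, ← Finset.smul_sum, ← QB, smul_smul]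
    congr 1
    push_cast [Nat.factorial_succ]
    ring

lemma le_deg (d : Fin 3 →₀ ℕ) (i : Fin 3) : d i ≤ d.sum fun _ m => m := by
  by_cases h : d i = 0
  · simp [h]
  · exact Finset.single_le_sum (f := fun a => d a) (fun j _ => Nat.zero_le _)
      (Finsupp.mem_support_iff.mpr h)

lemma coeff_sexp (u : MvPowerSeries (Fin 3) RR) (d : Fin 3 →₀ ℕ) :
    MvPowerSeries.coeff d (sexp u)
      = ∑ j ∈ range (d.sum (fun _ m => m) + 1),
          (j.factorial : ℚ)⁻¹ • MvPowerSeries.coeff d (u ^ j) := by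
  rw [MvPowerSeries.coeff_apply, sexp, map_sum]
  apply Finset.sum_congr rfl
  intro j _
  rfl

lemma sexp_serA (d : Fin 3 →₀ ℕ) :
    MvPowerSeries.coeff d (sexp serA)
      = if d 2 = 0 then
          ((((d 0).factorial : ℚ))⁻¹ * (((d 1).factorial : ℚ))⁻¹) • Pp (d 0) (d 1)
        else 0 := by
  rw [coeff_sexp]
  have hterm : ∀ j ∈ range (d.sum (fun _ m => m) + 1),
      (j.factorial : ℚ)⁻¹ • MvPowerSeries.coeff d (serA ^ j)
        = if j = d 1 then
            (if d 2 = 0 then ((((d 0).factorial : ℚ))⁻¹ * ((j.factorial : ℚ))⁻¹) • Pp (d 0) j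
             else 0)
          else 0 := by
    intro j _
    rw [coeff_serA_pow]
    by_cases hj : j = d 1
    · subst hj
      rw [if_pos rfl]
      by_cases h2 : d 2 = 0
      · rw [if_pos ⟨rfl, h2⟩, if_pos h2, smul_smul]
        ring_nf
      · rw [if_neg (by tauto), if_neg h2, smul_zero]
    · rw [if_neg (by tauto), if_neg hj, smul_zero]
  rw [Finset.sum_congr rfl hterm, Finset.sum_ite_eq']
  rw [if_pos (Finset.mem_range.mpr (Nat.lt_succ_of_le (le_deg d 1)))]

lemma sexp_serB (d : Fin 3 →₀ ℕ) :
    MvPowerSeries.coeff d (sexp serB)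
      = if d 1 = 0 then (((d 0).factorial : ℚ))⁻¹ • Qq (d 0) (d 2) else 0 := by
  rw [coeff_sexp]
  have hterm : ∀ j ∈ range (d.sum (fun _ m => m) + 1),
      (j.factorial : ℚ)⁻¹ • MvPowerSeries.coeff d (serB ^ j)
        = if j = d 2 then
            (if d 1 = 0 then (((d 0).factorial : ℚ))⁻¹ • Qq (d 0) j else 0)
          else 0 := by
    intro j _
    rw [coeff_serB_pow]
    by_cases hj : j = d 2
    · subst hj
      rw [if_pos rfl]
      by_cases h1 : d 1 = 0
      · rw [if_pos ⟨h1, rfl⟩, if_pos h1, smul_smul]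
        congr 1
        have : ((d 2).factorial : ℚ) ≠ 0 := Nat.cast_ne_zero.mpr (Nat.factorial_ne_zero _)
        field_simp
      · rw [if_neg (by tauto), if_neg h1, smul_zero]
    · rw [if_neg (by tauto), if_neg hj, smul_zero]
  rw [Finset.sum_congr rfl hterm, Finset.sum_ite_eq']
  rw [if_pos (Finset.mem_range.mpr (Nat.lt_succ_of_le (le_deg d 2)))]

/-- In `R⟦x,y,t⟧`,
`∑_{r≥0} ∑_{n≥k≥0} B^r_{n+r,k+r} x^n y^r t^k/(n!·r!) =
  exp(y·∑_{j≥0} a_{j+1} x^j/j!) · exp(t·∑_{j≥1} b_j x^j/j!)`. -/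
theorem stmt4 : Sgen = sexp serA * sexp serB := by
  apply MvPowerSeries.ext
  intro d
  rw [MvPowerSeries.coeff_mul]
  rw [key d _ 0 0 ?hF]
  case hF =>
    intro p _ hne
    constructor
    · by_contra hc
      apply hne
      rw [sexp_serA, if_neg hc, zero_mul]
    · by_contra hc
      apply hne
      rw [sexp_serB, if_neg hc, mul_zero]
  rw [if_pos ⟨Nat.zero_le _, Nat.zero_le _⟩]
  have hL : MvPowerSeries.coeff d Sgen
      = if d 2 ≤ d 0 then
          (((d 0).factorial * (d 1).factorial : ℚ))⁻¹ • rBell (d 0) (d 2) (d 1)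
        else 0 := rfl
  have hterm : ∀ m ∈ range (d 0 + 1),
      MvPowerSeries.coeff (Dg m (d 1 - 0) 0) (sexp serA)
          * MvPowerSeries.coeff (Dg (d 0 - m) 0 (d 2 - 0)) (sexp serB)
        = (((m.factorial : ℚ))⁻¹ * (((d 1).factorial : ℚ))⁻¹ * ((((d 0) - m).factorial : ℚ))⁻¹)
            • (Pp m (d 1) * Qq (d 0 - m) (d 2)) := by
    intro m _
    rw [sexp_serA, sexp_serB]
    simp only [Dg_apply0, Dg_apply1, Dg_apply2, Nat.sub_zero]
    simp only [if_true]
    rw [smul_mul_smul_comm]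
  rw [hL, Finset.sum_congr rfl hterm]
  by_cases hk : d 2 ≤ d 0
  case neg =>
    rw [if_neg hk]
    symm
    apply Finset.sum_eq_zero
    intro m _
    rw [Qq_eq_zero (d 0 - m) (d 2) (by omega), mul_zero, smul_zero]
  rw [if_pos hk, rBell_eq, Finset.smul_sum]
  apply Finset.sum_congr rfl
  intro m hm
  rw [Finset.mem_range] at hm
  rw [smul_smul]
  congr 1
  have h := fact_inv (by omega : m ≤ d 0)
  push_cast at h ⊢
  linear_combination (((d 1).factorial : ℚ))⁻¹ * h
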